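/- Let D be the open unit disc and J a relatively open proper subset of the unit circle such that every point of J can be approximated by points in the complement of closure(D) — which holds automatically. Then the polynomials are dense in A(D,J): for every f ∈ A(D,J) and every m ∈ ℕ there exists a polynomial p with sup_{z ∈ Δ_m} |f(z) − p(z)| < 1/m, where Δ_m = {z ∈ D ∪ J : dist(z, ∂D ∖ J) ≥ 1/m}. Consequently polynomials are dense in the Fréchet topology of A(D,J). -/

import Mathlib

open Set Metric
open scoped NNReal ENNReal

theorem stmt_15 (J : Set ℂ) (hJsub : J ⊆ sphere (0:ℂ) 1)
    (hJrelopen : ∃ U : Set ℂ, IsOpen U ∧ J = sphere (0:ℂ) 1 ∩ U)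
    (hJproper : J ≠ sphere (0:ℂ) 1)
    (f : ℂ → ℂ)
    (hf : ContinuousOn f (ball (0:ℂ) 1 ∪ J) ∧ DifferentiableOn ℂ f (ball (0:ℂ) 1))
    (m : ℕ) (hm : 1 ≤ m) :
    ∃ p : Polynomial ℂ,
      ∀ z ∈ {z ∈ ball (0:ℂ) 1 ∪ J | Metric.infDist z (sphere (0:ℂ) 1 \ J) ≥ 1 / (m : ℝ)},
        ‖f z - p.eval z‖ < 1 / (m : ℝ) := by
  obtain ⟨hfc, hfd⟩ := hf
  have hm0 : (0:ℝ) < m := by exact_mod_cast hm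
  have hεpos : (0:ℝ) < 1 / m := by positivity
  set S : Set ℂ := sphere (0:ℂ) 1 with hS
  set Dm : Set ℂ :=
    {z ∈ ball (0:ℂ) 1 ∪ J | Metric.infDist z (S \ J) ≥ 1 / (m : ℝ)} with hDm_def
  -- Δ_m is compact
  have hDm_eq : Dm = closedBall (0:ℂ) 1 ∩ {z | 1 / (m:ℝ) ≤ infDist z (S \ J)} := by
    ext z
    simp only [hDm_def, mem_sep_iff, mem_inter_iff, mem_setOf_eq, ge_iff_le]
    constructor
    · rintro ⟨hz, hd⟩
      refine ⟨?_, hd⟩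
      rcases hz with hz | hz
      · exact ball_subset_closedBall hz
      · exact sphere_subset_closedBall (hJsub hz)
    · rintro ⟨hz, hd⟩
      refine ⟨?_, hd⟩
      rcases lt_or_eq_of_le (mem_closedBall.mp hz) with h | h
      · exact Or.inl (mem_ball.mpr h)
      · right
        have hzS : z ∈ S := h
        by_contra hzJ
        have h0 : infDist z (S \ J) = 0 := infDist_zero_of_mem ⟨hzS, hzJ⟩
        rw [h0] at hd
        linarith
  have hDmc : IsCompact Dm := by
    rw [hDm_eq]
    exact (isCompact_closedBall _ _).inter_right
      (isClosed_le continuous_const (continuous_infDist_pt _))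
  have hDm_norm : ∀ z ∈ Dm, ‖z‖ ≤ 1 := by
    intro z hz
    have := (hDm_eq ▸ hz).1
    simpa [mem_closedBall, Complex.dist_eq] using this
  have hDm_sub : ∀ z ∈ Dm, z ∈ ball (0:ℂ) 1 ∪ J := fun z hz => hz.1
  -- compact set K containing all segments rz, z ∈ Δ_m, r ∈ [1/2,1]
  set K : Set ℂ := (fun p : ℝ × ℂ => (p.1 : ℂ) * p.2) '' (Icc (1/2 : ℝ) 1 ×ˢ Dm) with hK
  have hKc : IsCompact K :=
    (isCompact_Icc.prod hDmc).image
      ((Complex.continuous_ofReal.comp continuous_fst).mul continuous_snd)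
  have hKsub : K ⊆ ball (0:ℂ) 1 ∪ J := by
    rintro _ ⟨⟨t, z⟩, ⟨⟨hthalf, ht1⟩, hz⟩, rfl⟩
    replace hthalf : (1/2:ℝ) ≤ t := hthalf
    replace ht1 : t ≤ 1 := ht1
    replace hz : z ∈ Dm := hz
    rcases eq_or_lt_of_le ht1 with h | h
    · subst h
      simpa using hDm_sub z hz
    · left
      rw [mem_ball_zero_iff]
      have hnt : ‖(t:ℂ)‖ = t := by
        rw [Complex.norm_real, Real.norm_eq_abs, abs_of_nonneg (by linarith)]
      calc ‖(t:ℂ) * z‖ = t * ‖z‖ := by rw [norm_mul, hnt]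
        _ ≤ t * 1 := by
            apply mul_le_mul_of_nonneg_left (hDm_norm z hz) (by linarith)
        _ < 1 := by linarith
  have hmemK : ∀ t : ℝ, t ∈ Icc (1/2 : ℝ) 1 → ∀ z ∈ Dm, (t:ℂ) * z ∈ K :=
    fun t ht z hz => ⟨(t, z), ⟨ht, hz⟩, rfl⟩
  -- uniform continuity on K
  have hunif := hKc.uniformContinuousOn_of_continuous (hfc.mono hKsub)
  rw [Metric.uniformContinuousOn_iff] at hunif
  obtain ⟨δ, hδpos, hδ⟩ := hunif (1 / (2*m)) (by positivity)
  -- choose r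
  set r : ℝ := max (1/2) (1 - δ/2) with hr
  have hrhalf : (1/2 : ℝ) ≤ r := le_max_left _ _
  have hrpos : (0:ℝ) < r := by linarith
  have hr1 : r < 1 := max_lt (by norm_num) (by linarith)
  have h1r : 1 - r < δ := by
    have := le_max_right (1/2) (1 - δ/2)
    have : 1 - δ/2 ≤ r := this
    linarith
  -- the dilated function and its power series
  set ρ : ℝ := (1 + 1/r) / 2 with hρ
  have hρ1 : 1 < ρ := by
    have : 1 < 1/r := by rw [lt_div_iff₀ hrpos]; linarith
    rw [hρ]; linarith
  have hrρ : r * ρ < 1 := by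
    have : r * ρ = (r + 1) / 2 := by
      rw [hρ, mul_div_assoc', mul_add, mul_one, mul_one_div_cancel hrpos.ne']
    rw [this]; linarith
  set R : ℝ≥0 := ⟨ρ, by positivity⟩ with hR
  set r' : ℝ≥0 := ⟨(1 + ρ)/2, by positivity⟩ with hr'
  have hRpos : 0 < R := by
    rw [← NNReal.coe_lt_coe]
    show (0:ℝ) < ρ
    linarith
  have hgdiff : DifferentiableOn ℂ (fun z => f ((r:ℂ) * z)) (closedBall (0:ℂ) R) := by
    apply DifferentiableOn.comp (t := ball (0:ℂ) 1) hfd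
    · exact ((differentiable_const _).mul differentiable_id).differentiableOn
    · intro z hz
      rw [mem_ball_zero_iff]
      have hz1 : ‖z‖ ≤ ρ := by
        have : ‖z‖ ≤ (R:ℝ) := by simpa [mem_closedBall, Complex.dist_eq] using hz
        exact this
      have hnr : ‖(r:ℂ)‖ = r := by
        rw [Complex.norm_real, Real.norm_eq_abs, abs_of_nonneg (le_of_lt hrpos)]
      calc ‖(r:ℂ) * z‖ = r * ‖z‖ := by rw [norm_mul, hnr]
        _ ≤ r * ρ := mul_le_mul_of_nonneg_left hz1 (le_of_lt hrpos)
        _ < 1 := hrρ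
  have hps := hgdiff.hasFPowerSeriesOnBall hRpos
  set P := cauchyPowerSeries (fun z => f ((r:ℂ) * z)) 0 R with hP
  have hr'R : (r' : ℝ≥0∞) < (R : ℝ≥0∞) := by
    rw [ENNReal.coe_lt_coe, ← NNReal.coe_lt_coe]
    show (1 + ρ)/2 < ρ
    linarith
  have htu := hps.tendstoUniformlyOn hr'R
  rw [Metric.tendstoUniformlyOn_iff] at htu
  have hev := htu (1 / (2*m)) (by positivity)
  obtain ⟨n, hn⟩ := hev.exists
  -- the polynomial
  refine ⟨∑ k ∈ Finset.range n, Polynomial.C (P.coeff k) * Polynomial.X ^ k, ?_⟩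
  intro z hz
  have hz1 : ‖z‖ ≤ 1 := hDm_norm z hz
  have heval : (∑ k ∈ Finset.range n,
      Polynomial.C (P.coeff k) * Polynomial.X ^ k).eval z = P.partialSum n z := by
    rw [Polynomial.eval_finset_sum, FormalMultilinearSeries.partialSum]
    apply Finset.sum_congr rfl
    intro k _
    rw [FormalMultilinearSeries.apply_eq_pow_smul_coeff, smul_eq_mul]
    simp only [Polynomial.eval_mul, Polynomial.eval_C, Polynomial.eval_pow, Polynomial.eval_X]
    ring
  rw [heval]
  -- z is in ball 0 r'
  have hzball : z ∈ ball (0:ℂ) (r' : ℝ) := by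
    rw [mem_ball_zero_iff]
    show ‖z‖ < (1 + ρ)/2
    linarith
  have h1 : dist (f ((r:ℂ) * z)) (P.partialSum n z) < 1 / (2*m) := by
    have := hn z hzball
    simpa using this
  -- f(rz) close to f(z)
  have hzK : z ∈ K := by
    have := hmemK 1 ⟨by norm_num, le_refl 1⟩ z hz
    simpa using this
  have hrzK : (r:ℂ) * z ∈ K := hmemK r ⟨hrhalf, le_of_lt hr1⟩ z hz
  have hdist : dist z ((r:ℂ) * z) < δ := by
    have : z - (r:ℂ) * z = ((1:ℂ) - r) * z := by ring
    rw [dist_eq_norm, this, norm_mul]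
    have h1r' : ‖(1:ℂ) - (r:ℂ)‖ = 1 - r := by
      rw [show (1:ℂ) - (r:ℂ) = ((1 - r : ℝ) : ℂ) by push_cast; ring,
        Complex.norm_real, Real.norm_eq_abs, abs_of_nonneg (by linarith)]
    rw [h1r']
    calc (1 - r) * ‖z‖ ≤ (1 - r) * 1 :=
        mul_le_mul_of_nonneg_left hz1 (by linarith)
      _ < δ := by linarith
  have h2 : dist (f z) (f ((r:ℂ) * z)) < 1 / (2*m) := hδ z hzK _ hrzK hdist
  have hfinal : dist (f z) (P.partialSum n z) < 1 / m := by
    calc dist (f z) (P.partialSum n z)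
        ≤ dist (f z) (f ((r:ℂ) * z)) + dist (f ((r:ℂ) * z)) (P.partialSum n z) :=
          dist_triangle _ _ _
      _ < 1 / (2*m) + 1 / (2*m) := add_lt_add h2 h1
      _ = 1 / m := by
          rw [← add_div]
          rw [show (1:ℝ) + 1 = 2 by norm_num]
          rw [div_eq_div_iff (by positivity) (by positivity)]
          ring
  simpa [dist_eq_norm] using hfinal
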